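/- Let A be a finite-dimensional algebra over an algebraically closed field K and let T be a module in mod A with Ext^1_A(T, X) = 0 for every X in Fac T. Suppose 0 → L → T_0 → M → 0 is a short exact sequence in mod A with T_0 in add T and pd_A M ≤ 1. Then Ext^1_A(L, N) = 0 for every N in Fac T; in particular, if L lies in Fac T then L is Ext-projective in Fac T. -/

import Mathlib

/-!
We formalize finitely generated right `A`-modules as finitely generated modules over the
opposite ring `Aᵐᵒᵖ`, working in the category `ModuleCat.{0} Aᵐᵒᵖ`.  Ext-groups are the
`Ext`-groups of Mathlib's derived-category API, and vanishing of an Ext-group is expressed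
as its being a subsingleton.  Projective (resp. injective) dimension bounds are expressed
via the standard characterization by vanishing of Ext-groups in high degrees.
-/

open CategoryTheory

noncomputable instance (R : Type) [Ring R] : HasExt.{1} (ModuleCat.{0} R) := by
  letI : HasDerivedCategory.{1} (ModuleCat.{0} R) := HasDerivedCategory.standard _
  exact hasExt_of_hasDerivedCategory _

/-- `DA = Hom_K(A, K)` as a right `A`-module (i.e. a left `Aᵐᵒᵖ`-module):
`(f · a)(x) = f (a * x)`. -/
noncomputable instance dualModule (K A : Type) [Field K] [Ring A] [Algebra K A] :
    Module Aᵐᵒᵖ (A →ₗ[K] K) where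
  smul a f := f.comp (LinearMap.mulLeft K a.unop)
  one_smul f := by ext x; show f ((1 : Aᵐᵒᵖ).unop * x) = f x; simp
  mul_smul a b f := by
    ext x
    show f ((a * b).unop * x) = f (b.unop * (a.unop * x))
    simp [mul_assoc]
  smul_zero a := by ext x; rfl
  smul_add a f g := by ext x; rfl
  add_smul a b f := by
    ext x
    show f ((a + b).unop * x) = f (a.unop * x) + f (b.unop * x)
    rw [MulOpposite.unop_add, add_mul, map_add]
  zero_smul f := by ext x; show f ((0 : Aᵐᵒᵖ).unop * x) = 0; simp

/-- `Hom_R(T, M)` as a right module over `End_R(T)` (i.e. a left module over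
`(End_R T)ᵐᵒᵖ`), via precomposition. -/
instance endOpModule (R T M : Type) [Ring R] [AddCommGroup T] [Module R T]
    [AddCommGroup M] [Module R M] :
    Module (Module.End R T)ᵐᵒᵖ (T →ₗ[R] M) where
  smul b φ := φ.comp b.unop
  one_smul φ := by ext x; rfl
  mul_smul a b φ := by ext x; rfl
  smul_zero a := by ext x; rfl
  smul_add a φ ψ := by ext x; rfl
  add_smul a b φ := by
    ext x
    show φ ((a + b).unop x) = φ (a.unop x) + φ (b.unop x)
    rw [MulOpposite.unop_add, LinearMap.add_apply, map_add]
  zero_smul φ := by ext x; show φ ((0 : (Module.End R T)ᵐᵒᵖ).unop x) = 0; simp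

variable (R : Type) [Ring R]

/-- `Ext^i(M, N) = 0`. -/
def ExtVanish (M N : ModuleCat.{0} R) (i : ℕ) : Prop :=
  Subsingleton (Abelian.Ext M N i)

/-- `M ∈ Fac T`: `M` is a quotient of a finite direct sum of copies of `T`. -/
def MemFac (T M : ModuleCat.{0} R) : Prop :=
  ∃ (n : ℕ) (f : ModuleCat.of R (Fin n → T) ⟶ M), Function.Surjective f

/-- `N ∈ Sub T`: `N` embeds into a finite direct sum of copies of `T`. -/
def MemSub (T N : ModuleCat.{0} R) : Prop :=
  ∃ (n : ℕ) (f : N ⟶ ModuleCat.of R (Fin n → T)), Function.Injective f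

/-- `X ∈ add T`: `X` is a direct summand of a finite direct sum of copies of `T`. -/
def MemAdd (T X : ModuleCat.{0} R) : Prop :=
  ∃ (n : ℕ) (i : X ⟶ ModuleCat.of R (Fin n → T)) (p : ModuleCat.of R (Fin n → T) ⟶ X),
    i ≫ p = 𝟙 X

/-- The projective dimension of `M` is at most `n`: `Ext^i(M, -) = 0` for all `i > n`. -/
def pdLE (M : ModuleCat.{0} R) (n : ℕ) : Prop :=
  ∀ (N : ModuleCat.{0} R) (i : ℕ), n < i → ExtVanish R M N i

/-- The injective dimension of `M` is at most `n`: `Ext^i(-, M) = 0` for all `i > n`. -/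
def idLE (M : ModuleCat.{0} R) (n : ℕ) : Prop :=
  ∀ (N : ModuleCat.{0} R) (i : ℕ), n < i → ExtVanish R N M i

/-- There is an exact sequence `0 → X → T_0 → ⋯ → T_n → 0` with all `T_i ∈ add T`. -/
def AddCoresol (T : ModuleCat.{0} R) : ModuleCat.{0} R → ℕ → Prop
  | X, 0 => MemAdd R T X
  | X, (n + 1) => ∃ (T₀ : ModuleCat.{0} R) (f : X ⟶ T₀), MemAdd R T T₀ ∧
      Function.Injective f ∧ AddCoresol T (ModuleCat.of R (T₀ ⧸ LinearMap.range f.hom)) n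

/-- There is an exact sequence `0 → T_n → ⋯ → T_0 → X → 0` with all `T_i ∈ add T`. -/
def AddResol (T : ModuleCat.{0} R) : ModuleCat.{0} R → ℕ → Prop
  | X, 0 => MemAdd R T X
  | X, (n + 1) => ∃ (T₀ : ModuleCat.{0} R) (f : T₀ ⟶ X), MemAdd R T T₀ ∧
      Function.Surjective f ∧ AddResol T (ModuleCat.of R (LinearMap.ker f.hom)) n

/-- `T` is a tilting module, where `Reg` is the regular module `A`. -/
def IsTilting (Reg T : ModuleCat.{0} R) : Prop :=
  ∃ n : ℕ, pdLE R T n ∧ (∀ i : ℕ, 1 ≤ i → ExtVanish R T T i) ∧ AddCoresol R T Reg n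

/-- `T` is a cotilting module, where `DA` is the dual of the regular module. -/
def IsCotilting (DA T : ModuleCat.{0} R) : Prop :=
  ∃ n : ℕ, idLE R T n ∧ (∀ i : ℕ, 1 ≤ i → ExtVanish R T T i) ∧ AddResol R T DA n

/-- `T` is τ-rigid: `Ext^1(T, Fac T) = 0`. -/
def TauRigid (T : ModuleCat.{0} R) : Prop :=
  ∀ M : ModuleCat.{0} R, MemFac R T M → ExtVanish R T M 1

/-- `T` is τ⁻¹-rigid: `Ext^1(Sub T, T) = 0`. -/
def TauInvRigid (T : ModuleCat.{0} R) : Prop :=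
  ∀ N : ModuleCat.{0} R, MemSub R T N → ExtVanish R N T 1

/-- `M` is an indecomposable module. -/
def Indec (M : ModuleCat.{0} R) : Prop :=
  Nontrivial M ∧ ∀ (Y Z : ModuleCat.{0} R), Nontrivial Y → Nontrivial Z →
    IsEmpty (M ≃ₗ[R] (Y × Z))

/-- `X` is a direct summand of `T`. -/
def IsSummand (T X : ModuleCat.{0} R) : Prop :=
  ∃ (i : X ⟶ T) (p : T ⟶ X), i ≫ p = 𝟙 X

/-- `T` has exactly `n` pairwise non-isomorphic indecomposable direct summands. -/
def IndecSummandCount (T : ModuleCat.{0} R) (n : ℕ) : Prop :=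
  ∃ M : Fin n → ModuleCat.{0} R,
    (∀ i, Indec R (M i) ∧ IsSummand R T (M i)) ∧
    (∀ i j, Nonempty (M i ≃ₗ[R] M j) → i = j) ∧
    (∀ X : ModuleCat.{0} R, Indec R X → IsSummand R T X → ∃ i, Nonempty (X ≃ₗ[R] M i))


section Aux

open CategoryTheory Abelian

universe w' u' v'

namespace CategoryTheory.Abelian.Ext

variable {C : Type u'} [Category.{v'} C] [Abelian C] [HasExt.{w'} C]

lemma mk₀_add' {X Y : C} (f g : X ⟶ Y) :
    Ext.mk₀ (f + g) = Ext.mk₀ f + Ext.mk₀ g := by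
  letI : HasDerivedCategory C := HasDerivedCategory.standard _
  apply Ext.ext
  rw [Ext.add_hom, Ext.mk₀_hom, Ext.mk₀_hom, Ext.mk₀_hom, Functor.map_add]
  simp [ShiftedHom.mk₀, Preadditive.add_comp]

/-- `mk₀` as an additive map. -/
noncomputable def mk₀AddHom (X Y : C) : (X ⟶ Y) →+ Ext X Y 0 :=
  AddMonoidHom.mk' Ext.mk₀ mk₀_add'

end CategoryTheory.Abelian.Ext

variable {R' : Type} [Ring R']

/-- Vanishing of Ext passes to retracts in the first argument. -/
lemma extVanish_of_retract {X Y N : ModuleCat.{0} R'} {n : ℕ}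
    (i : X ⟶ Y) (p : Y ⟶ X) (hip : i ≫ p = 𝟙 X)
    (h : Subsingleton (Abelian.Ext Y N n)) :
    Subsingleton (Abelian.Ext X N n) := by
  have key : ∀ x : Abelian.Ext X N n, x = 0 := by
    intro x
    calc x = (Ext.mk₀ (𝟙 X)).comp x (zero_add n) := (Ext.mk₀_id_comp x).symm
    _ = (Ext.mk₀ i).comp ((Ext.mk₀ p).comp x (zero_add n)) (zero_add n) := by
        rw [Ext.mk₀_comp_mk₀_assoc, hip]
    _ = (Ext.mk₀ i).comp 0 (zero_add n) := by rw [Subsingleton.elim ((Ext.mk₀ p).comp x (zero_add n)) 0]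
    _ = 0 := Ext.comp_zero _ _ _ _ _
  exact ⟨fun a b => by rw [key a, key b]⟩

/-- Vanishing of `Ext(T, N, n)` implies vanishing of `Ext(Tᵏ, N, n)`. -/
lemma extVanish_pi {T N : ModuleCat.{0} R'} {n : ℕ}
    (h : Subsingleton (Abelian.Ext T N n)) (k : ℕ) :
    Subsingleton (Abelian.Ext (ModuleCat.of R' (Fin k → T)) N n) := by
  set Tk := ModuleCat.of R' (Fin k → T) with hTk
  have key : ∀ x : Abelian.Ext Tk N n, x = 0 := by
    intro x
    set π : Fin k → (Tk ⟶ T) := fun j => ModuleCat.ofHom (LinearMap.proj j) with hπ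
    set ι : Fin k → (T ⟶ Tk) := fun j =>
      ModuleCat.ofHom (LinearMap.single R' (fun _ : Fin k => T) j) with hι
    have hid : (𝟙 Tk : Tk ⟶ Tk) = ∑ j : Fin k, (π j ≫ ι j) := by
      apply ModuleCat.hom_ext
      apply LinearMap.ext
      intro v
      change v = _
      rw [ModuleCat.hom_sum, LinearMap.coe_sum, Finset.sum_apply]
      symm
      exact Finset.univ_sum_single v
    calc x = (Ext.mk₀ (𝟙 Tk)).comp x (zero_add n) := (Ext.mk₀_id_comp x).symm
    _ = (∑ j : Fin k, Ext.mk₀ (π j ≫ ι j)).comp x (zero_add n) := by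
        rw [hid, show Ext.mk₀ (∑ j : Fin k, π j ≫ ι j) = ∑ j : Fin k, Ext.mk₀ (π j ≫ ι j)
          from map_sum (Ext.mk₀AddHom Tk Tk) _ _]
    _ = ∑ j : Fin k, (Ext.mk₀ (π j ≫ ι j)).comp x (zero_add n) :=
        map_sum ((Ext.bilinearComp Tk Tk N 0 n n (zero_add n)).flip x) _ _
    _ = 0 := by
        apply Finset.sum_eq_zero
        intro j _
        rw [← Ext.mk₀_comp_mk₀_assoc,
          Subsingleton.elim ((Ext.mk₀ (ι j)).comp x (zero_add n)) 0, Ext.comp_zero]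
  exact ⟨fun a b => by rw [key a, key b]⟩

end Aux

/-- Let `T ∈ mod A` with `Ext¹(T, Fac T) = 0`, and let
`0 → L → T₀ → M → 0` be a short exact sequence in `mod A` with `T₀ ∈ add T` and
`pd_A M ≤ 1`.  Then `Ext¹_A(L, N) = 0` for every `N ∈ Fac T`; in particular, if
`L ∈ Fac T` then `L` is Ext-projective in `Fac T`. -/
theorem stmt14 (K A : Type) [Field K] [IsAlgClosed K] [Ring A] [Algebra K A]
    [FiniteDimensional K A]
    (T : ModuleCat.{0} Aᵐᵒᵖ) (hT : Module.Finite Aᵐᵒᵖ T)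
    (hrig : ∀ X : ModuleCat.{0} Aᵐᵒᵖ, MemFac Aᵐᵒᵖ T X → ExtVanish Aᵐᵒᵖ T X 1)
    (L T₀ M : ModuleCat.{0} Aᵐᵒᵖ)
    (hL : Module.Finite Aᵐᵒᵖ L) (hT₀ : Module.Finite Aᵐᵒᵖ T₀) (hM : Module.Finite Aᵐᵒᵖ M)
    (f : L ⟶ T₀) (g : T₀ ⟶ M)
    (hf : Function.Injective f) (hg : Function.Surjective g) (hfg : Function.Exact ⇑f ⇑g)
    (hadd : MemAdd Aᵐᵒᵖ T T₀) (hpd : pdLE Aᵐᵒᵖ M 1) :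
    ∀ N : ModuleCat.{0} Aᵐᵒᵖ, MemFac Aᵐᵒᵖ T N → ExtVanish Aᵐᵒᵖ L N 1  := by
  intro N hN
  classical
  have hTN : Subsingleton (Abelian.Ext T N 1) := hrig N hN
  obtain ⟨n, i, p, hip⟩ := hadd
  have hT₀N : Subsingleton (Abelian.Ext T₀ N 1) :=
    extVanish_of_retract i p hip (extVanish_pi hTN n)
  have hcomp : f ≫ g = 0 := by
    apply ModuleCat.hom_ext
    apply LinearMap.ext
    intro x
    exact hfg.apply_apply_eq_zero x
  set S : ShortComplex (ModuleCat.{0} Aᵐᵒᵖ) := ShortComplex.mk f g hcomp with hSdef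
  have hS : S.ShortExact :=
    { exact := (ShortComplex.ShortExact.moduleCat_exact_iff_function_exact S).mpr hfg
      mono_f := (ModuleCat.mono_iff_injective f).mpr hf
      epi_g := (ModuleCat.epi_iff_surjective g).mpr hg }
  have key : ∀ x : Abelian.Ext L N 1, x = 0 := by
    intro x
    haveI hM2 : Subsingleton (Abelian.Ext M N 2) := hpd N 2 (by norm_num)
    have hδ : hS.extClass.comp x (show (1:ℕ)+1 = 2 from rfl) = 0 := Subsingleton.elim _ _
    obtain ⟨x₂, hx₂⟩ := CategoryTheory.Abelian.Ext.contravariant_sequence_exact₁ hS N x (show (1:ℕ)+1 = 2 from rfl) hδ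
    rw [← hx₂, Subsingleton.elim x₂ 0, Abelian.Ext.comp_zero]
  exact ⟨fun a b => by rw [key a, key b]⟩
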